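/- arXiv:1710.02958 — 4 statements merged into one kernel-verified Lean document; each statement's English description precedes it below -/
import Mathlib

section
/- A function f : 2^A → 2^A is a closure if and only if f is an extensive pseudo-closure. -/
theorem closure_iff_extensive_pseudo_closure {A : Type*} (f : Set A → Set A) :
    ((∀ X : Set A, X ⊆ f X) ∧ (∀ X Y : Set A, X ⊆ Y → f X ⊆ f Y) ∧
      (∀ X : Set A, f (f X) = f X)) ↔
    ((∀ X : Set A, X ⊆ f X) ∧ (∀ X Y : Set A, f (X ∪ Y) = f (f X ∪ f Y))) := by
  constructor
  · rintro ⟨hext, hmono, hidem⟩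
    refine ⟨hext, fun X Y => ?_⟩
    apply subset_antisymm
    · exact hmono _ _ (Set.union_subset_union (hext X) (hext Y))
    · have h : f X ∪ f Y ⊆ f (X ∪ Y) :=
        Set.union_subset (hmono _ _ Set.subset_union_left)
          (hmono _ _ Set.subset_union_right)
      calc f (f X ∪ f Y) ⊆ f (f (X ∪ Y)) := hmono _ _ h
        _ = f (X ∪ Y) := hidem _
  · rintro ⟨hext, hpc⟩
    have hidem : ∀ X, f (f X) = f X := by
      intro X
      have := hpc X X
      simpa using this.symm
    refine ⟨hext, fun X Y hXY => ?_, hidem⟩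
    have h : f Y = f (f X ∪ f Y) := by
      have := hpc X Y
      rwa [Set.union_eq_self_of_subset_left hXY] at this
    rw [h]
    exact (Set.subset_union_left).trans (hext _)
end

section
/- Let cl : 2^A → 2^A be a closure, and let ∅ ≠ X' ⊆ X ⊆ A. Then the function f defined by f(Y) := cl(Y ∪ X) \ X' is a pseudo-closure, i.e., f(Y ∪ Z) = f(f(Y) ∪ f(Z)) for all Y, Z ⊆ A. -/
theorem pseudo_closure_of_closure_diff {A : Type*} (cl : Set A → Set A)
    (hext : ∀ X : Set A, X ⊆ cl X)
    (hinc : ∀ X Y : Set A, X ⊆ Y → cl X ⊆ cl Y)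
    (hidem : ∀ X : Set A, cl (cl X) = cl X)
    (X X' : Set A) (hX' : X'.Nonempty) (hsub : X' ⊆ X) :
    ∀ Y Z : Set A,
      (fun Y => cl (Y ∪ X) \ X') (Y ∪ Z) =
      (fun Y => cl (Y ∪ X) \ X')
        ((fun Y => cl (Y ∪ X) \ X') Y ∪ (fun Y => cl (Y ∪ X) \ X') Z) := by
  intro Y Z
  simp only
  have key : cl ((cl (Y ∪ X) \ X' ∪ cl (Z ∪ X) \ X') ∪ X) = cl (Y ∪ Z ∪ X) := by
    apply subset_antisymm
    · have hYX : Y ∪ X ⊆ Y ∪ Z ∪ X :=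
        Set.union_subset_union Set.subset_union_left (subset_refl X)
      have hZX : Z ∪ X ⊆ Y ∪ Z ∪ X :=
        Set.union_subset_union Set.subset_union_right (subset_refl X)
      have h1 : (cl (Y ∪ X) \ X' ∪ cl (Z ∪ X) \ X') ∪ X ⊆ cl (Y ∪ Z ∪ X) := by
        rintro a (((⟨ha, -⟩ | ⟨ha, -⟩)) | ha)
        · exact hinc _ _ hYX ha
        · exact hinc _ _ hZX ha
        · exact hext _ (Or.inr ha)
      calc cl _ ⊆ cl (cl (Y ∪ Z ∪ X)) := hinc _ _ h1
        _ = cl (Y ∪ Z ∪ X) := hidem _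
    · apply hinc
      rintro a ((ha | ha) | ha)
      · by_cases h : a ∈ X'
        · exact Or.inr (hsub h)
        · exact Or.inl (Or.inl ⟨hext _ (Or.inl ha), h⟩)
      · by_cases h : a ∈ X'
        · exact Or.inr (hsub h)
        · exact Or.inl (Or.inr ⟨hext _ (Or.inl ha), h⟩)
      · exact Or.inr ha
  rw [← key]
end

section
/- Let cl be a closure on a finite set A with cl(∅) = ∅. If X ⊆ A is a minimum generator of A (i.e., cl(X) = A and no strictly smaller set generates A) and X is nonempty, then for any w ∈ X, the set X \ {w} is a minimum generator of cl(X \ {w}). -/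
theorem minimum_generator_remove {A : Type*} [Fintype A] (cl : Set A → Set A)
    (hext : ∀ X : Set A, X ⊆ cl X)
    (hinc : ∀ X Y : Set A, X ⊆ Y → cl X ⊆ cl Y)
    (hidem : ∀ X : Set A, cl (cl X) = cl X)
    (hempty : cl ∅ = ∅)
    (X : Set A) (hgen : cl X = Set.univ)
    (hmin : ∀ Y : Set A, cl Y = Set.univ → X.ncard ≤ Y.ncard)
    (hne : X.Nonempty) (w : A) (hw : w ∈ X) :
    ∀ Y : Set A, cl Y = cl (X \ {w}) → (X \ {w}).ncard ≤ Y.ncard := by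
  intro Y hY
  have hYfin : Y.Finite := Set.toFinite _
  have hXfin : X.Finite := Set.toFinite _
  -- Y ∪ {w} generates univ
  have hsub : X ⊆ cl (Y ∪ {w}) := by
    intro x hx
    by_cases hxw : x = w
    · exact hext _ (Or.inr (by simp [hxw]))
    · have : x ∈ cl (X \ {w}) := hext _ ⟨hx, hxw⟩
      rw [← hY] at this
      exact hinc Y (Y ∪ {w}) Set.subset_union_left this
  have hgen' : cl (Y ∪ {w}) = Set.univ := by
    apply Set.eq_univ_of_univ_subset
    rw [← hgen]
    have := hinc X (cl (Y ∪ {w})) hsub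
    rwa [hidem] at this
  have h1 : X.ncard ≤ (Y ∪ {w}).ncard := hmin _ hgen'
  have h2 : (Y ∪ {w}).ncard ≤ Y.ncard + 1 := by
    have := Set.ncard_union_le Y {w}
    simpa using this
  have h3 : (X \ {w}).ncard = X.ncard - 1 := by
    rw [Set.ncard_diff_singleton_of_mem hw]
  omega
end

section
/- If v is a vertex of a connected graph G (with at least 2 vertices) such that G − v is connected and isometric in G, then v belongs to every isometric-hull set of G. In particular, every vertex of degree 1 belongs to every isometric-hull set of G. -/
def SimpleGraph.Subgraph.IsIsometric {V : Type*} {G : SimpleGraph V} (H : G.Subgraph) : Prop :=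
  ∀ x y : H.verts, H.coe.dist x y = G.dist (x : V) (y : V)

/-- `S` is an isometric-hull set of `G` if no proper isometric subgraph of `G`
contains `S`. -/
def IsIsometricHullSet {V : Type*} (G : SimpleGraph V) (S : Set V) : Prop :=
  ∀ H : G.Subgraph, H.IsIsometric → S ⊆ H.verts → H = ⊤

section Helpers

open SimpleGraph

variable {V : Type*} {G : SimpleGraph V}

lemma path_avoids_degree_one [Fintype V] [DecidableEq V] [DecidableRel G.Adj] {v x y : V}
    (hdeg : G.degree v = 1) (hx : x ≠ v) (hy : y ≠ v) {p : G.Walk x y}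
    (hp : p.IsPath) : v ∉ p.support := by
  intro hmem
  have hcard : (G.neighborFinset v).card = 1 := hdeg
  obtain ⟨u, hu⟩ := Finset.card_eq_one.mp hcard
  have huniq : ∀ w, G.Adj v w → w = u := by
    intro w hw
    have h1 : w ∈ G.neighborFinset v := (SimpleGraph.mem_neighborFinset G v w).mpr hw
    rw [hu] at h1
    exact Finset.mem_singleton.mp h1
  set q := p.takeUntil v hmem with hq
  set r := p.dropUntil v hmem with hr
  have hspec := p.take_spec hmem
  have hp' : (q.append r).IsPath := by rw [hq, hr, hspec]; exact hp
  obtain ⟨a, ha, q', hq'⟩ :=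
    SimpleGraph.Walk.exists_eq_cons_of_ne (fun h => hx h.symm) q.reverse
  obtain ⟨b, hb, r', hr'⟩ :=
    SimpleGraph.Walk.exists_eq_cons_of_ne (fun h => hy h.symm) r
  have haq : u ∈ q.support := by
    have h2 : a ∈ q.reverse.support := by
      rw [hq']
      exact List.mem_cons_of_mem _ q'.start_mem_support
    rw [SimpleGraph.Walk.support_reverse] at h2
    rw [← huniq a ha]
    exact List.mem_reverse.mp h2
  have hbr : u ∈ r.support.tail := by
    rw [hr', SimpleGraph.Walk.support_cons, List.tail_cons, ← huniq b hb]
    exact r'.start_mem_support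
  have hnodup := hp'.support_nodup
  rw [SimpleGraph.Walk.support_append] at hnodup
  exact (List.nodup_append'.mp hnodup).2.2 haq hbr

lemma lift_walk {v : V} : ∀ {x y : V} (p : G.Walk x y), v ∉ p.support →
    ∀ (hx : x ∈ ((⊤ : G.Subgraph).deleteVerts {v}).verts)
      (hy : y ∈ ((⊤ : G.Subgraph).deleteVerts {v}).verts),
    ∃ q : ((⊤ : G.Subgraph).deleteVerts {v}).coe.Walk ⟨x, hx⟩ ⟨y, hy⟩,
      q.length = p.length := by
  intro x y p
  induction p with
  | nil => exact fun _ _ _ => ⟨SimpleGraph.Walk.nil, rfl⟩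
  | @cons a b c hab p2 ih =>
    intro hav hx hy
    simp only [SimpleGraph.Walk.support_cons, List.mem_cons, not_or] at hav
    have hb : b ∈ ((⊤ : G.Subgraph).deleteVerts {v}).verts := by
      refine ⟨trivial, fun h => ?_⟩
      exact hav.2 (Set.mem_singleton_iff.mp h ▸ p2.start_mem_support)
    obtain ⟨q2, hq2⟩ := ih hav.2 hb hy
    refine ⟨SimpleGraph.Walk.cons ?_ q2, by rw [SimpleGraph.Walk.length_cons, hq2, SimpleGraph.Walk.length_cons]⟩
    simp only [SimpleGraph.Subgraph.coe_adj, SimpleGraph.Subgraph.deleteVerts_adj]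
    exact ⟨trivial, fun h => hav.1 h.symm, trivial, fun h => hb.2 h, hab⟩


end Helpers

theorem mem_every_isometric_hull_set {V : Type*} [Fintype V] [DecidableEq V]
    (G : SimpleGraph V) [DecidableRel G.Adj] (hconn : G.Connected)
    (hcard : 2 ≤ Fintype.card V) :
    (∀ v : V,
      ((⊤ : G.Subgraph).deleteVerts {v}).coe.Connected →
      ((⊤ : G.Subgraph).deleteVerts {v}).IsIsometric →
      ∀ S : Set V, IsIsometricHullSet G S → v ∈ S) ∧
    (∀ v : V, G.degree v = 1 → ∀ S : Set V, IsIsometricHullSet G S → v ∈ S) := by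
  have part1 : ∀ v : V,
      ((⊤ : G.Subgraph).deleteVerts {v}).coe.Connected →
      ((⊤ : G.Subgraph).deleteVerts {v}).IsIsometric →
      ∀ S : Set V, IsIsometricHullSet G S → v ∈ S := by
    intro v _ hiso S hS
    by_contra hv
    have hsub : S ⊆ ((⊤ : G.Subgraph).deleteVerts {v}).verts := by
      intro s hs
      exact ⟨trivial, fun h => hv (Set.mem_singleton_iff.mp h ▸ hs)⟩
    have htop := hS _ hiso hsub
    have : v ∈ ((⊤ : G.Subgraph).deleteVerts {v}).verts := by
      rw [htop]; trivial
    exact this.2 rfl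
  refine ⟨part1, fun v hdeg S hS => part1 v ?_ ?_ S hS⟩
  · -- connectivity
    obtain ⟨w, hw⟩ := Fintype.exists_ne_of_one_lt_card (by omega) v
    have hne : Nonempty ↑((⊤ : G.Subgraph).deleteVerts {v}).verts := ⟨⟨w, trivial, hw⟩⟩
    refine SimpleGraph.Connected.mk ?_
    rintro ⟨x, hx⟩ ⟨y, hy⟩
    obtain ⟨p, hp, -⟩ := hconn.exists_path_of_dist x y
    have hav := path_avoids_degree_one hdeg (fun h => hx.2 (h ▸ rfl))
      (fun h => hy.2 (h ▸ rfl)) hp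
    obtain ⟨q, -⟩ := lift_walk p hav hx hy
    exact ⟨q⟩
  · -- isometric
    rintro ⟨x, hx⟩ ⟨y, hy⟩
    apply le_antisymm
    · obtain ⟨p, hp, hlen⟩ := hconn.exists_path_of_dist x y
      have hav := path_avoids_degree_one hdeg (fun h => hx.2 (h ▸ rfl))
        (fun h => hy.2 (h ▸ rfl)) hp
      obtain ⟨q, hq⟩ := lift_walk p hav hx hy
      calc ((⊤ : G.Subgraph).deleteVerts {v}).coe.dist ⟨x, hx⟩ ⟨y, hy⟩ ≤ q.length :=
            SimpleGraph.dist_le q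
        _ = G.dist x y := by rw [hq, hlen]
    · obtain ⟨p, hp, -⟩ := hconn.exists_path_of_dist x y
      have hav := path_avoids_degree_one hdeg (fun h => hx.2 (h ▸ rfl))
        (fun h => hy.2 (h ▸ rfl)) hp
      obtain ⟨q0, -⟩ := lift_walk p hav hx hy
      have hreach : ((⊤ : G.Subgraph).deleteVerts {v}).coe.Reachable ⟨x, hx⟩ ⟨y, hy⟩ := ⟨q0⟩
      obtain ⟨q, -, hqlen⟩ := hreach.exists_path_of_dist
      have := SimpleGraph.dist_le (q.map ((⊤ : G.Subgraph).deleteVerts {v}).hom)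
      rwa [SimpleGraph.Walk.length_map, hqlen] at this
end
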